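/- Let G be a group, φ : G → ℤ a surjective group homomorphism, g ∈ G with φ(g) = 1, L₀ a subgroup of ker φ, and n ≥ 1 an integer. Set Lᵢ = g^{-i} L₀ g^{i} for 0 ≤ i ≤ n−1. Assume: (1) gⁿ commutes with every element of ker φ; (2) for all i ≠ j every element of Lᵢ commutes with every element of Lⱼ, and the multiplication map L₀ × L₁ × ⋯ × L_{n−1} → ker φ, (x₀, …, x_{n−1}) ↦ x₀ x₁ ⋯ x_{n−1}, is a bijection (i.e. ker φ is the internal direct product of L₀, …, L_{n−1}). Then the map ξ : L₀ ≀ₙ ℤ → G defined by ξ(b₀, b₁, …, b_{n−1}; k) = b₀ (g^{-1} b₁ g) (g^{-2} b₂ g^{2}) ⋯ (g^{-(n−1)} b_{n−1} g^{n−1}) · g^{k} is a group isomorphism. -/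

import Mathlib

open Pointwise

open Fin.CommRing in
/-- The multiplication of the wreath product `H ≀ₙ ℤ`: the underlying set is
`(Fin n → H) × ℤ` and `(b, k) * (b', k') = (b · α(b'; k), k + k')`, where
`α(b'; k) i = b' (i + k)`, indices taken modulo `n` (this is the semidirect product
`Hⁿ ⋊ ℤ` with respect to the cyclic-shift action of `ℤ` on `Hⁿ`). -/
def wreathMul {H : Type*} [Group H] {n : ℕ} [NeZero n]
    (p q : (Fin n → H) × ℤ) : (Fin n → H) × ℤ :=
  (p.1 * fun i : Fin n => q.1 (i + (p.2 : Fin n)), p.2 + q.2)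

/-- The map `ξ : L₀ ≀ₙ ℤ → G`,
`ξ(b₀, …, b_{n-1}; k) = b₀ (g⁻¹ b₁ g) (g⁻² b₂ g²) ⋯ (g^{-(n-1)} b_{n-1} g^{n-1}) · g ^ k`. -/
def wreathToGroup {G : Type*} [Group G] (g : G) (n : ℕ) (L₀ : Subgroup G)
    (p : (Fin n → L₀) × ℤ) : G :=
  ((List.finRange n).map fun i : Fin n =>
    (g ^ (i : ℕ))⁻¹ * ((p.1 i : G)) * g ^ (i : ℕ)).prod * g ^ p.2

open Fin.CommRing

/-- The value of the integer cast on `Fin n`. -/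
lemma WreathAux.fin_val_intCast (n : ℕ) [NeZero n] (k : ℤ) :
    (((k : Fin n) : ℕ) : ℤ) = k % n := by
  have h1 : ((k : Fin n)) = (((k % n).toNat : ℕ) : Fin n) := by
    have : ((k % n).toNat : ℤ) = k % n :=
      Int.toNat_of_nonneg (Int.emod_nonneg k (by exact_mod_cast (NeZero.ne n)))
    rw [← Int.cast_natCast (R := Fin n), this]
    conv_lhs => rw [← Int.emod_add_mul_ediv k n]
    push_cast
    simp [Fin.natCast_self]
  rw [h1, Fin.val_natCast, Nat.mod_eq_of_lt,
    Int.toNat_of_nonneg (Int.emod_nonneg k (by exact_mod_cast (NeZero.ne n)))]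
  have := Int.emod_lt_of_pos k (b := n) (by exact_mod_cast Nat.pos_of_ne_zero (NeZero.ne n))
  omega

/-- Conjugation by congruent powers of `g` agrees on elements commuting with `g ^ n`. -/
lemma WreathAux.conj_congr {G : Type*} [Group G] (g x : G) (n : ℕ) (hx : Commute (g ^ n) x)
    {m m' : ℤ} (h : (n : ℤ) ∣ (m' - m)) :
    g ^ m * x * (g ^ m)⁻¹ = g ^ m' * x * (g ^ m')⁻¹ := by
  obtain ⟨t, ht⟩ := h
  have hm' : g ^ m' = g ^ m * ((g ^ n : G)) ^ t := by
    rw [← zpow_natCast g n, ← zpow_mul, ← zpow_add]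
    congr 1; linarith
  have hc : ((g ^ n : G)) ^ t * x * (((g ^ n : G)) ^ t)⁻¹ = x := by
    rw [(hx.zpow_left t).eq, mul_inv_cancel_right]
  calc g ^ m * x * (g ^ m)⁻¹
      = g ^ m * ((g ^ n : G) ^ t * x * ((g ^ n : G) ^ t)⁻¹) * (g ^ m)⁻¹ := by rw [hc]
    _ = g ^ m' * x * (g ^ m')⁻¹ := by rw [hm', mul_inv_rev]; group

/-- The arithmetic congruence needed for the cyclic shift. -/
lemma WreathAux.fin_dvd_aux (n : ℕ) [NeZero n] (i κ : Fin n) (k : ℤ)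
    (hκ : ((κ : ℕ) : ℤ) = k % n) :
    (n : ℤ) ∣ (-(((i - κ : Fin n) : ℕ) : ℤ) - (k - (i : ℕ))) := by
  have hsub : ((i - κ : Fin n) : ℕ) = ((n - (κ : ℕ)) + (i : ℕ)) % n := by
    rw [Fin.sub_def]
  set A := (n - (κ : ℕ)) + (i : ℕ) with hA
  have h1 : ((A % n : ℕ) : ℤ) + (n : ℤ) * ((A / n : ℕ) : ℤ) = (A : ℤ) := by
    exact_mod_cast Nat.mod_add_div A n
  have h2 : (A : ℤ) = ((n : ℤ) - ((κ : ℕ) : ℤ)) + ((i : ℕ) : ℤ) := by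
    have := κ.isLt; omega
  have h3 : k % (n : ℤ) = k - n * (k / n) := Int.emod_def k n
  refine ⟨((A / n : ℕ) : ℤ) - (k / n) - 1, ?_⟩
  rw [hsub]
  linarith [h1, h2, hκ, h3]

/-- A product of pointwise products splits when the factors suitably commute. -/
lemma WreathAux.prod_mul {G : Type*} [Group G] {ι : Type*} (c f : ι → G) :
    ∀ l : List ι, l.Pairwise (fun i j => Commute (f i) (c j)) →
    (l.map fun i => c i * f i).prod = (l.map c).prod * (l.map f).prod := by
  intro l hl
  induction l with
  | nil => simp
  | cons a t ih =>
    rw [List.pairwise_cons] at hl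
    have h1 : Commute (f a) ((t.map c).prod) :=
      Commute.list_prod_right _ _ (by
        intro x hx
        obtain ⟨j, hj, rfl⟩ := List.mem_map.1 hx
        exact hl.1 j hj)
    simp only [List.map_cons, List.prod_cons, ih hl.2]
    rw [mul_assoc (c a), ← mul_assoc (f a), h1.eq]
    group

/-- Let `G` be a group, `φ : G → ℤ` a surjective homomorphism, `g ∈ G`
with `φ g = 1`, `L₀ ≤ ker φ` a subgroup and `n ≥ 1`.  Let `L i = g⁻ⁱ L₀ gⁱ` for
`0 ≤ i ≤ n - 1`.  Assume (1) `g ^ n` commutes with every element of `ker φ`;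
(2) the subgroups `L i`, `L j` commute elementwise for `i ≠ j` and the multiplication
map `L₀ × L₁ × ⋯ × L_{n-1} → ker φ` is a bijection (i.e. every element of `ker φ` is
uniquely a product `x₀ x₁ ⋯ x_{n-1}` with `xᵢ ∈ L i`).  Then
`ξ(b₀, …, b_{n-1}; k) = b₀ (g⁻¹ b₁ g) ⋯ (g^{-(n-1)} b_{n-1} g^{n-1}) g ^ k` is a group
isomorphism `L₀ ≀ₙ ℤ → G`: it is multiplicative and bijective. -/
theorem wreathToGroup_isIso {G : Type*} [Group G]
    (φ : G →* Multiplicative ℤ) (hφ : Function.Surjective φ)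
    (g : G) (hg : φ g = Multiplicative.ofAdd 1)
    (n : ℕ) [NeZero n]
    (L₀ : Subgroup G) (hL₀ : L₀ ≤ φ.ker)
    (hgn : ∀ x ∈ φ.ker, g ^ n * x = x * g ^ n)
    (L : ℕ → Subgroup G) (hL : ∀ i, L i = MulAut.conj (g ^ i)⁻¹ • L₀)
    (hcomm : ∀ i j, i < n → j < n → i ≠ j →
      ∀ x ∈ L i, ∀ y ∈ L j, x * y = y * x)
    (hdirect : ∀ y ∈ φ.ker, ∃! b : (i : Fin n) → L (i : ℕ),
      ((List.finRange n).map fun i : Fin n => ((b i : G))).prod = y) :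
    (∀ p q : (Fin n → L₀) × ℤ,
      wreathToGroup g n L₀ (wreathMul p q)
        = wreathToGroup g n L₀ p * wreathToGroup g n L₀ q)
    ∧ Function.Bijective (wreathToGroup g n L₀) := by
  classical
  -- membership of the conjugates
  have memL : ∀ (i : Fin n) (x : L₀),
      (g ^ (i : ℕ))⁻¹ * (x : G) * g ^ (i : ℕ) ∈ L (i : ℕ) := by
    intro i x
    rw [hL]
    exact (Subgroup.mem_smul_pointwise_iff_exists _ _ _).2
      ⟨x, x.2, by simp only [MulAut.smul_def, MulAut.conj_apply, inv_inv]⟩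
  have hker : ∀ (i : ℕ) (x : L₀), (g ^ i)⁻¹ * (x : G) * g ^ i ∈ φ.ker := by
    intro i x
    have hx : φ (x : G) = 1 := hL₀ x.2
    simp [MonoidHom.mem_ker, hx]
  have hprodker : ∀ b : Fin n → L₀,
      ((List.finRange n).map fun i : Fin n =>
        (g ^ (i : ℕ))⁻¹ * ((b i : G)) * g ^ (i : ℕ)).prod ∈ φ.ker := by
    intro b
    refine list_prod_mem ?_
    intro x hx
    obtain ⟨i, -, rfl⟩ := List.mem_map.1 hx
    exact hker _ _
  have hφg : ∀ k : ℤ, φ (g ^ k) = Multiplicative.ofAdd k := by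
    intro k
    rw [map_zpow, hg, ← ofAdd_zsmul]
    simp
  have hφξ : ∀ p : (Fin n → L₀) × ℤ,
      φ (wreathToGroup g n L₀ p) = Multiplicative.ofAdd p.2 := by
    intro p
    have h1 := hprodker p.1
    rw [MonoidHom.mem_ker] at h1
    rw [wreathToGroup, map_mul, h1, one_mul, hφg]
  have hcommL : ∀ (i j : Fin n), i ≠ j →
      ∀ x ∈ L (i : ℕ), ∀ y ∈ L (j : ℕ), Commute x y := by
    intro i j hij x hx y hy
    exact hcomm i j i.isLt j.isLt (fun h => hij (Fin.val_injective h)) x hx y hy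
  have hgncomm : ∀ x : L₀, Commute (g ^ n) (x : G) := fun x => hgn _ (hL₀ x.2)
  have hmul : ∀ p q : (Fin n → L₀) × ℤ,
      wreathToGroup g n L₀ (wreathMul p q)
        = wreathToGroup g n L₀ p * wreathToGroup g n L₀ q := by
    rintro ⟨b, k⟩ ⟨b', k'⟩
    have hκ : ((((k : Fin n)) : ℕ) : ℤ) = k % n := WreathAux.fin_val_intCast n k
    -- the three families of conjugates
    have key : ∀ i : Fin n,
        g ^ k * ((g ^ (i : ℕ))⁻¹ * (b' i : G) * g ^ (i : ℕ)) * (g ^ k)⁻¹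
          = (g ^ ((i - (k : Fin n) : Fin n) : ℕ))⁻¹ *
              (b' ((i - (k : Fin n)) + (k : Fin n)) : G) *
              g ^ ((i - (k : Fin n) : Fin n) : ℕ) := by
      intro i
      have h1 : g ^ k * ((g ^ (i : ℕ))⁻¹ * (b' i : G) * g ^ (i : ℕ)) * (g ^ k)⁻¹
          = g ^ (k - ((i : ℕ) : ℤ)) * (b' i : G) * (g ^ (k - ((i : ℕ) : ℤ)))⁻¹ := by
        group
      have h2 := WreathAux.conj_congr g ((b' i : G)) n (hgncomm _)
        (m := k - ((i : ℕ) : ℤ)) (m' := -(((i - (k : Fin n) : Fin n) : ℕ) : ℤ))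
        (WreathAux.fin_dvd_aux n i (k : Fin n) k hκ)
      rw [h1, h2, sub_add_cancel]
      simp only [zpow_neg, zpow_natCast, inv_inv]
    have hconj : g ^ k * ((List.finRange n).map fun i : Fin n =>
          (g ^ (i : ℕ))⁻¹ * (b' i : G) * g ^ (i : ℕ)).prod * (g ^ k)⁻¹
        = ((List.finRange n).map fun i : Fin n =>
            (g ^ (i : ℕ))⁻¹ * (b' (i + (k : Fin n)) : G) * g ^ (i : ℕ)).prod := by
      have h4 : g ^ k * ((List.finRange n).map fun i : Fin n =>
            (g ^ (i : ℕ))⁻¹ * (b' i : G) * g ^ (i : ℕ)).prod * (g ^ k)⁻¹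
          = ((List.finRange n).map fun i : Fin n =>
              g ^ k * ((g ^ (i : ℕ))⁻¹ * (b' i : G) * g ^ (i : ℕ)) * (g ^ k)⁻¹).prod := by
        rw [← MulAut.conj_apply (g ^ k), map_list_prod, List.map_map]
        refine congrArg List.prod (List.map_congr_left ?_)
        intro i _
        exact MulAut.conj_apply _ _
      have h7 : ((List.finRange n).map fun i : Fin n =>
            g ^ k * ((g ^ (i : ℕ))⁻¹ * (b' i : G) * g ^ (i : ℕ)) * (g ^ k)⁻¹)
          = ((List.finRange n).map (Equiv.subRight ((k : Fin n)) : Fin n → Fin n)).map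
              (fun j : Fin n =>
                (g ^ (j : ℕ))⁻¹ * (b' (j + (k : Fin n)) : G) * g ^ (j : ℕ)) := by
        rw [List.map_map]
        exact List.map_congr_left fun i _ => key i
      rw [h4, h7]
      refine List.Perm.prod_eq' ?_ ?_
      · exact (Equiv.Perm.map_finRange_perm (Equiv.subRight ((k : Fin n)))).map _
      · refine List.Pairwise.map _ ?_
          (((List.nodup_finRange n).map (Equiv.subRight ((k : Fin n))).injective))
        intro u v huv
        exact hcommL u v huv _ (memL u (b' (u + (k : Fin n)))) _ (memL v (b' (v + (k : Fin n))))
    -- split the product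
    have hsplit : ((List.finRange n).map fun i : Fin n =>
          (g ^ (i : ℕ))⁻¹ * ((b i : G) * (b' (i + (k : Fin n)) : G)) * g ^ (i : ℕ)).prod
        = ((List.finRange n).map fun i : Fin n =>
            (g ^ (i : ℕ))⁻¹ * (b i : G) * g ^ (i : ℕ)).prod *
          ((List.finRange n).map fun i : Fin n =>
            (g ^ (i : ℕ))⁻¹ * (b' (i + (k : Fin n)) : G) * g ^ (i : ℕ)).prod := by
      have e : ∀ i ∈ List.finRange n,
          (g ^ (i : ℕ))⁻¹ * ((b i : G) * (b' (i + (k : Fin n)) : G)) * g ^ (i : ℕ)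
            = ((g ^ (i : ℕ))⁻¹ * (b i : G) * g ^ (i : ℕ)) *
              ((g ^ (i : ℕ))⁻¹ * (b' (i + (k : Fin n)) : G) * g ^ (i : ℕ)) := by
        intro i _
        group
      rw [List.map_congr_left e]
      refine WreathAux.prod_mul
        (fun i : Fin n => (g ^ (i : ℕ))⁻¹ * (b i : G) * g ^ (i : ℕ))
        (fun i : Fin n => (g ^ (i : ℕ))⁻¹ * (b' (i + (k : Fin n)) : G) * g ^ (i : ℕ))
        (List.finRange n) ?_
      refine List.Pairwise.imp ?_ (List.nodup_finRange n)
      intro u v huv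
      exact hcommL u v huv _ (memL u (b' (u + (k : Fin n)))) _ (memL v (b v))
    show ((List.finRange n).map fun i : Fin n =>
          (g ^ (i : ℕ))⁻¹ * ((b i : G) * (b' (i + (k : Fin n)) : G)) * g ^ (i : ℕ)).prod
            * g ^ (k + k')
        = (((List.finRange n).map fun i : Fin n =>
            (g ^ (i : ℕ))⁻¹ * (b i : G) * g ^ (i : ℕ)).prod * g ^ k) *
          (((List.finRange n).map fun i : Fin n =>
            (g ^ (i : ℕ))⁻¹ * (b' i : G) * g ^ (i : ℕ)).prod * g ^ k')
    rw [hsplit, ← hconj, zpow_add]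
    group
  refine ⟨hmul, ?_, ?_⟩
  · -- injectivity
    rintro ⟨b, k⟩ ⟨b', k'⟩ hpq
    have h2 : k = k' := by
      have h := congrArg φ hpq
      rw [hφξ, hφξ] at h
      exact Multiplicative.ofAdd.injective h
    have hpq' : ((List.finRange n).map fun i : Fin n =>
          (g ^ (i : ℕ))⁻¹ * (b i : G) * g ^ (i : ℕ)).prod * g ^ k
        = ((List.finRange n).map fun i : Fin n =>
          (g ^ (i : ℕ))⁻¹ * (b' i : G) * g ^ (i : ℕ)).prod * g ^ k := by
      have := hpq
      rw [wreathToGroup, wreathToGroup] at this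
      rw [this]
      simp [h2]
    have hprodeq := mul_right_cancel hpq'
    obtain ⟨B, hB, hu⟩ := hdirect _ (hprodker b)
    have e1 : (fun i : Fin n =>
        (⟨_, memL i (b i)⟩ : L (i : ℕ))) = B := hu _ rfl
    have e2 : (fun i : Fin n =>
        (⟨_, memL i (b' i)⟩ : L (i : ℕ))) = B := hu _ hprodeq.symm
    have h1 : b = b' := by
      funext i
      have h3 := congrFun (e1.trans e2.symm) i
      have h4 : (g ^ (i : ℕ))⁻¹ * (b i : G) * g ^ (i : ℕ)
          = (g ^ (i : ℕ))⁻¹ * (b' i : G) * g ^ (i : ℕ) := Subtype.ext_iff.1 h3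
      exact Subtype.ext (mul_left_cancel (mul_right_cancel h4))
    rw [h1, h2]
  · -- surjectivity
    intro x
    set k : ℤ := Multiplicative.toAdd (φ x) with hk
    have hx : x * (g ^ k)⁻¹ ∈ φ.ker := by
      rw [MonoidHom.mem_ker, map_mul, map_inv, hφg]
      simp [hk]
    obtain ⟨b, hb, -⟩ := hdirect _ hx
    have hex : ∀ i : Fin n, ∃ s, s ∈ L₀ ∧ (g ^ (i : ℕ))⁻¹ * s * g ^ (i : ℕ) = (b i : G) := by
      intro i
      obtain ⟨z, hz1, hz2⟩ : ∃ z : G, z = ((b i : G)) ∧ z ∈ L (i : ℕ) := ⟨_, rfl, (b i).2⟩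
      rw [hL] at hz2
      obtain ⟨s, hs, hsx⟩ := (Subgroup.mem_smul_pointwise_iff_exists _ _ _).1 hz2
      refine ⟨s, hs, ?_⟩
      rw [← hz1]
      simp only [MulAut.smul_def, MulAut.conj_apply, inv_inv] at hsx
      exact hsx
    choose s hs1 hs2 using hex
    refine ⟨(fun i => ⟨s i, hs1 i⟩, k), ?_⟩
    show ((List.finRange n).map fun i : Fin n =>
        (g ^ (i : ℕ))⁻¹ * (s i) * g ^ (i : ℕ)).prod * g ^ k = x
    have hmapeq : ((List.finRange n).map fun i : Fin n =>
        (g ^ (i : ℕ))⁻¹ * (s i) * g ^ (i : ℕ))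
        = (List.finRange n).map fun i : Fin n => ((b i : G)) :=
      List.map_congr_left fun i _ => hs2 i
    rw [hmapeq, hb, inv_mul_cancel_right]
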